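/- If ω1, ω3, ω5, ω7 solve the asymmetric center-manifold system with parameters ν > 0 and δ ∈ (√(2/3), √(3/2)), then the energy E(t) = (1/2)(|ω1(t)|² + |ω3(t)|² + |ω5(t)|² + |ω7(t)|²) satisfies E(t) ≤ E(0) e^{−2 K₁ ν t} for all t ≥ 0, where K₁ = min(1, 1/δ²). -/

import Mathlib

open Complex

private lemma normSq_hasDerivAt' {ω : ℝ → ℂ} {d : ℂ} {t : ℝ} (h : HasDerivAt ω d t) :
    HasDerivAt (fun s => Complex.normSq (ω s)) (2 * ((starRingEnd ℂ) (ω t) * d).re) t := by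
  have hc : HasDerivAt (fun s => (starRingEnd ℂ) (ω s)) ((starRingEnd ℂ) d) t := h.star
  have hm := hc.mul h
  have hre := Complex.reCLM.hasFDerivAt.comp_hasDerivAt t hm.hasFDerivAt
  have heq : (⇑Complex.reCLM ∘ ((fun s => (starRingEnd ℂ) (ω s)) * ω))
      = fun s => Complex.normSq (ω s) := by
    funext s; simp [Complex.normSq_apply, Complex.mul_re]
  have hval : Complex.reCLM ((starRingEnd ℂ) d * ω t + (starRingEnd ℂ) (ω t) * d)
      = 2 * ((starRingEnd ℂ) (ω t) * d).re := by
    simp [Complex.mul_re]; ring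
  rw [heq, hval] at hre
  exact hre

set_option maxHeartbeats 1000000 in
private lemma main_bound' (ν δ K : ℝ) (hν : 0 < ν) (hδ : 0 < δ)
    (hK1 : K ≤ ν) (hK2 : K ≤ ν / δ ^ 2) (hK5 : K ≤ ν * (1 + δ ^ 2) / δ ^ 2)
    (z1 z3 z5 z7 : ℂ) :
    2 * ((starRingEnd ℂ) z1 * (-((ν / δ ^ 2 : ℝ) : ℂ) * z1
        + ((1 / (δ * (1 + δ ^ 2)) : ℝ) : ℂ) * (z3 * z7 - (starRingEnd ℂ) z3 * z5)
        + ((3 * δ ^ 6 / (2 * ν * (4 + δ ^ 2) * (1 + δ ^ 2) ^ 2) : ℝ) : ℂ) * z1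
            * ((‖z5‖ ^ 2 + ‖z7‖ ^ 2 : ℝ) : ℂ))).re
      + 2 * ((starRingEnd ℂ) z3 * (-(ν : ℂ) * z3
        + ((δ ^ 3 / (1 + δ ^ 2) : ℝ) : ℂ) * ((starRingEnd ℂ) z1 * z5 - z1 * (starRingEnd ℂ) z7)
        + ((3 * δ ^ 2 / (2 * ν * (1 + 4 * δ ^ 2) * (1 + δ ^ 2) ^ 2) : ℝ) : ℂ) * z3
            * ((‖z5‖ ^ 2 + ‖z7‖ ^ 2 : ℝ) : ℂ))).re
      + 2 * ((starRingEnd ℂ) z5 * (-((ν * (1 + δ ^ 2) / δ ^ 2 : ℝ) : ℂ) * z5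
        - (((δ ^ 2 - 1) / δ : ℝ) : ℂ) * z1 * z3
        - ((δ ^ 6 * (3 + δ ^ 2) / (2 * ν * (4 + δ ^ 2) * (1 + δ ^ 2)) : ℝ) : ℂ) * z5
            * ((‖z1‖ ^ 2 : ℝ) : ℂ)
        - (((1 + 3 * δ ^ 2) / (2 * ν * δ ^ 2 * (1 + 4 * δ ^ 2) * (1 + δ ^ 2)) : ℝ) : ℂ) * z5
            * ((‖z3‖ ^ 2 : ℝ) : ℂ))).re
      + 2 * ((starRingEnd ℂ) z7 * (-((ν * (1 + δ ^ 2) / δ ^ 2 : ℝ) : ℂ) * z7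
        + (((δ ^ 2 - 1) / δ : ℝ) : ℂ) * z1 * (starRingEnd ℂ) z3
        - ((δ ^ 6 * (3 + δ ^ 2) / (2 * ν * (4 + δ ^ 2) * (1 + δ ^ 2)) : ℝ) : ℂ) * z7
            * ((‖z1‖ ^ 2 : ℝ) : ℂ)
        - (((1 + 3 * δ ^ 2) / (2 * ν * δ ^ 2 * (1 + 4 * δ ^ 2) * (1 + δ ^ 2)) : ℝ) : ℂ) * z7
            * ((‖z3‖ ^ 2 : ℝ) : ℂ))).re
      ≤ -(2 * K) * (Complex.normSq z1 + Complex.normSq z3 + Complex.normSq z5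
          + Complex.normSq z7) := by
  -- cubic terms are nonpositive
  have hAB : 3 * δ ^ 6 / (2 * ν * (4 + δ ^ 2) * (1 + δ ^ 2) ^ 2)
      ≤ δ ^ 6 * (3 + δ ^ 2) / (2 * ν * (4 + δ ^ 2) * (1 + δ ^ 2)) := by
    rw [div_le_div_iff₀ (by positivity) (by positivity)]
    have hnum : (3:ℝ) * δ ^ 6 ≤ δ ^ 6 * (3 + δ ^ 2) * (1 + δ ^ 2) := by
      nlinarith [pow_nonneg hδ.le 6, sq_nonneg δ, pow_nonneg hδ.le 8, pow_nonneg hδ.le 10]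
    calc 3 * δ ^ 6 * (2 * ν * (4 + δ ^ 2) * (1 + δ ^ 2))
        ≤ (δ ^ 6 * (3 + δ ^ 2) * (1 + δ ^ 2)) * (2 * ν * (4 + δ ^ 2) * (1 + δ ^ 2)) :=
          mul_le_mul_of_nonneg_right hnum (by positivity)
      _ = δ ^ 6 * (3 + δ ^ 2) * (2 * ν * (4 + δ ^ 2) * (1 + δ ^ 2) ^ 2) := by ring
  have hA'B' : 3 * δ ^ 2 / (2 * ν * (1 + 4 * δ ^ 2) * (1 + δ ^ 2) ^ 2)
      ≤ (1 + 3 * δ ^ 2) / (2 * ν * δ ^ 2 * (1 + 4 * δ ^ 2) * (1 + δ ^ 2)) := by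
    rw [div_le_div_iff₀ (by positivity) (by positivity)]
    have hnum : (3:ℝ) * δ ^ 4 ≤ (1 + 3 * δ ^ 2) * (1 + δ ^ 2) := by nlinarith [sq_nonneg δ]
    calc 3 * δ ^ 2 * (2 * ν * δ ^ 2 * (1 + 4 * δ ^ 2) * (1 + δ ^ 2))
        = (3 * δ ^ 4) * (2 * ν * (1 + 4 * δ ^ 2) * (1 + δ ^ 2)) := by ring
      _ ≤ ((1 + 3 * δ ^ 2) * (1 + δ ^ 2)) * (2 * ν * (1 + 4 * δ ^ 2) * (1 + δ ^ 2)) :=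
          mul_le_mul_of_nonneg_right hnum (by positivity)
      _ = (1 + 3 * δ ^ 2) * (2 * ν * (1 + 4 * δ ^ 2) * (1 + δ ^ 2) ^ 2) := by ring
  have ha : (starRingEnd ℂ) z1 * z1 = ((Complex.normSq z1 : ℝ) : ℂ) := by
    rw [mul_comm, Complex.mul_conj]
  have hb : (starRingEnd ℂ) z3 * z3 = ((Complex.normSq z3 : ℝ) : ℂ) := by
    rw [mul_comm, Complex.mul_conj]
  have hcc : (starRingEnd ℂ) z5 * z5 = ((Complex.normSq z5 : ℝ) : ℂ) := by
    rw [mul_comm, Complex.mul_conj]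
  have hee : (starRingEnd ℂ) z7 * z7 = ((Complex.normSq z7 : ℝ) : ℂ) := by
    rw [mul_comm, Complex.mul_conj]
  set a := Complex.normSq z1 with ha'
  set b := Complex.normSq z3 with hb'
  set c := Complex.normSq z5 with hc'
  set e := Complex.normSq z7 with he'
  have ha0 : 0 ≤ a := Complex.normSq_nonneg z1
  have hb0 : 0 ≤ b := Complex.normSq_nonneg z3
  have hc0 : 0 ≤ c := Complex.normSq_nonneg z5
  have he0 : 0 ≤ e := Complex.normSq_nonneg z7
  -- re-swap identities
  have hX3 : (z1 * ((starRingEnd ℂ) z3 * (starRingEnd ℂ) z7)).re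
      = ((starRingEnd ℂ) z1 * (z3 * z7)).re := by
    rw [show z1 * ((starRingEnd ℂ) z3 * (starRingEnd ℂ) z7)
        = (starRingEnd ℂ) ((starRingEnd ℂ) z1 * (z3 * z7)) by
      rw [map_mul, map_mul, Complex.conj_conj], Complex.conj_re]
  have hY5 : ((starRingEnd ℂ) z5 * (z1 * z3)).re
      = ((starRingEnd ℂ) z1 * ((starRingEnd ℂ) z3 * z5)).re := by
    rw [show (starRingEnd ℂ) z5 * (z1 * z3)
        = (starRingEnd ℂ) ((starRingEnd ℂ) z1 * ((starRingEnd ℂ) z3 * z5)) by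
      rw [map_mul, map_mul, Complex.conj_conj, Complex.conj_conj]; ring, Complex.conj_re]
  have hX7 : ((starRingEnd ℂ) z7 * (z1 * (starRingEnd ℂ) z3)).re
      = ((starRingEnd ℂ) z1 * (z3 * z7)).re := by
    rw [show (starRingEnd ℂ) z7 * (z1 * (starRingEnd ℂ) z3)
        = (starRingEnd ℂ) ((starRingEnd ℂ) z1 * (z3 * z7)) by
      rw [map_mul, map_mul, Complex.conj_conj]; ring, Complex.conj_re]
  -- component 1
  have e1 : ((starRingEnd ℂ) z1 * (-((ν / δ ^ 2 : ℝ) : ℂ) * z1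
        + ((1 / (δ * (1 + δ ^ 2)) : ℝ) : ℂ) * (z3 * z7 - (starRingEnd ℂ) z3 * z5)
        + ((3 * δ ^ 6 / (2 * ν * (4 + δ ^ 2) * (1 + δ ^ 2) ^ 2) : ℝ) : ℂ) * z1
            * ((‖z5‖ ^ 2 + ‖z7‖ ^ 2 : ℝ) : ℂ))).re
      = -(ν / δ ^ 2) * a
        + (1 / (δ * (1 + δ ^ 2))) * (((starRingEnd ℂ) z1 * (z3 * z7)).re
            - ((starRingEnd ℂ) z1 * ((starRingEnd ℂ) z3 * z5)).re)
        + (3 * δ ^ 6 / (2 * ν * (4 + δ ^ 2) * (1 + δ ^ 2) ^ 2)) * (a * (c + e)) := by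
    have hc1 : (starRingEnd ℂ) z1 * (-((ν / δ ^ 2 : ℝ) : ℂ) * z1
          + ((1 / (δ * (1 + δ ^ 2)) : ℝ) : ℂ) * (z3 * z7 - (starRingEnd ℂ) z3 * z5)
          + ((3 * δ ^ 6 / (2 * ν * (4 + δ ^ 2) * (1 + δ ^ 2) ^ 2) : ℝ) : ℂ) * z1
              * ((‖z5‖ ^ 2 + ‖z7‖ ^ 2 : ℝ) : ℂ))
        = ((-(ν / δ ^ 2) * a : ℝ) : ℂ)
          + ((1 / (δ * (1 + δ ^ 2)) : ℝ) : ℂ) * ((starRingEnd ℂ) z1 * (z3 * z7)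
              - (starRingEnd ℂ) z1 * ((starRingEnd ℂ) z3 * z5))
          + ((3 * δ ^ 6 / (2 * ν * (4 + δ ^ 2) * (1 + δ ^ 2) ^ 2) * (a * (c + e)) : ℝ) : ℂ) := by
      rw [Complex.sq_norm, Complex.sq_norm, ← hc', ← he']
      push_cast
      linear_combination (3 * (δ:ℂ) ^ 6 / (2 * (ν:ℂ) * (4 + (δ:ℂ) ^ 2) * (1 + (δ:ℂ) ^ 2) ^ 2)
          * ((c:ℂ) + (e:ℂ)) - (ν:ℂ) / (δ:ℂ) ^ 2) * ha
    rw [hc1]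
    simp only [Complex.add_re, Complex.re_ofReal_mul, Complex.sub_re, Complex.ofReal_re]
  -- component 3
  have e3 : ((starRingEnd ℂ) z3 * (-(ν : ℂ) * z3
        + ((δ ^ 3 / (1 + δ ^ 2) : ℝ) : ℂ) * ((starRingEnd ℂ) z1 * z5 - z1 * (starRingEnd ℂ) z7)
        + ((3 * δ ^ 2 / (2 * ν * (1 + 4 * δ ^ 2) * (1 + δ ^ 2) ^ 2) : ℝ) : ℂ) * z3
            * ((‖z5‖ ^ 2 + ‖z7‖ ^ 2 : ℝ) : ℂ))).re
      = -ν * b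
        + (δ ^ 3 / (1 + δ ^ 2)) * (((starRingEnd ℂ) z1 * ((starRingEnd ℂ) z3 * z5)).re
            - ((starRingEnd ℂ) z1 * (z3 * z7)).re)
        + (3 * δ ^ 2 / (2 * ν * (1 + 4 * δ ^ 2) * (1 + δ ^ 2) ^ 2)) * (b * (c + e)) := by
    have hc3 : (starRingEnd ℂ) z3 * (-(ν : ℂ) * z3
          + ((δ ^ 3 / (1 + δ ^ 2) : ℝ) : ℂ) * ((starRingEnd ℂ) z1 * z5 - z1 * (starRingEnd ℂ) z7)
          + ((3 * δ ^ 2 / (2 * ν * (1 + 4 * δ ^ 2) * (1 + δ ^ 2) ^ 2) : ℝ) : ℂ) * z3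
              * ((‖z5‖ ^ 2 + ‖z7‖ ^ 2 : ℝ) : ℂ))
        = ((-ν * b : ℝ) : ℂ)
          + ((δ ^ 3 / (1 + δ ^ 2) : ℝ) : ℂ) * ((starRingEnd ℂ) z1 * ((starRingEnd ℂ) z3 * z5)
              - z1 * ((starRingEnd ℂ) z3 * (starRingEnd ℂ) z7))
          + ((3 * δ ^ 2 / (2 * ν * (1 + 4 * δ ^ 2) * (1 + δ ^ 2) ^ 2) * (b * (c + e)) : ℝ) : ℂ) := by
      rw [Complex.sq_norm, Complex.sq_norm, ← hc', ← he']
      push_cast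
      linear_combination (3 * (δ:ℂ) ^ 2 / (2 * (ν:ℂ) * (1 + 4 * (δ:ℂ) ^ 2) * (1 + (δ:ℂ) ^ 2) ^ 2)
          * ((c:ℂ) + (e:ℂ)) - (ν:ℂ)) * hb
    rw [hc3]
    simp only [Complex.add_re, Complex.re_ofReal_mul, Complex.sub_re, Complex.ofReal_re]
    rw [hX3]
  -- component 5
  have e5 : ((starRingEnd ℂ) z5 * (-((ν * (1 + δ ^ 2) / δ ^ 2 : ℝ) : ℂ) * z5
        - (((δ ^ 2 - 1) / δ : ℝ) : ℂ) * z1 * z3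
        - ((δ ^ 6 * (3 + δ ^ 2) / (2 * ν * (4 + δ ^ 2) * (1 + δ ^ 2)) : ℝ) : ℂ) * z5
            * ((‖z1‖ ^ 2 : ℝ) : ℂ)
        - (((1 + 3 * δ ^ 2) / (2 * ν * δ ^ 2 * (1 + 4 * δ ^ 2) * (1 + δ ^ 2)) : ℝ) : ℂ) * z5
            * ((‖z3‖ ^ 2 : ℝ) : ℂ))).re
      = -(ν * (1 + δ ^ 2) / δ ^ 2) * c
        - ((δ ^ 2 - 1) / δ) * ((starRingEnd ℂ) z1 * ((starRingEnd ℂ) z3 * z5)).re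
        - (δ ^ 6 * (3 + δ ^ 2) / (2 * ν * (4 + δ ^ 2) * (1 + δ ^ 2))) * (c * a)
        - ((1 + 3 * δ ^ 2) / (2 * ν * δ ^ 2 * (1 + 4 * δ ^ 2) * (1 + δ ^ 2))) * (c * b) := by
    have hc5 : (starRingEnd ℂ) z5 * (-((ν * (1 + δ ^ 2) / δ ^ 2 : ℝ) : ℂ) * z5
          - (((δ ^ 2 - 1) / δ : ℝ) : ℂ) * z1 * z3
          - ((δ ^ 6 * (3 + δ ^ 2) / (2 * ν * (4 + δ ^ 2) * (1 + δ ^ 2)) : ℝ) : ℂ) * z5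
              * ((‖z1‖ ^ 2 : ℝ) : ℂ)
          - (((1 + 3 * δ ^ 2) / (2 * ν * δ ^ 2 * (1 + 4 * δ ^ 2) * (1 + δ ^ 2)) : ℝ) : ℂ) * z5
              * ((‖z3‖ ^ 2 : ℝ) : ℂ))
        = ((-(ν * (1 + δ ^ 2) / δ ^ 2) * c : ℝ) : ℂ)
          - (((δ ^ 2 - 1) / δ : ℝ) : ℂ) * ((starRingEnd ℂ) z5 * (z1 * z3))
          - ((δ ^ 6 * (3 + δ ^ 2) / (2 * ν * (4 + δ ^ 2) * (1 + δ ^ 2)) * (c * a) : ℝ) : ℂ)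
          - (((1 + 3 * δ ^ 2) / (2 * ν * δ ^ 2 * (1 + 4 * δ ^ 2) * (1 + δ ^ 2)) * (c * b) : ℝ) : ℂ) := by
      rw [Complex.sq_norm, Complex.sq_norm, ← ha', ← hb']
      push_cast
      linear_combination (-((ν:ℂ) * (1 + (δ:ℂ) ^ 2) / (δ:ℂ) ^ 2)
          - (δ:ℂ) ^ 6 * (3 + (δ:ℂ) ^ 2) / (2 * (ν:ℂ) * (4 + (δ:ℂ) ^ 2) * (1 + (δ:ℂ) ^ 2)) * (a:ℂ)
          - (1 + 3 * (δ:ℂ) ^ 2) / (2 * (ν:ℂ) * (δ:ℂ) ^ 2 * (1 + 4 * (δ:ℂ) ^ 2) * (1 + (δ:ℂ) ^ 2)) * (b:ℂ)) * hcc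
    rw [hc5]
    simp only [Complex.sub_re, Complex.re_ofReal_mul, Complex.ofReal_re]
    rw [hY5]
  -- component 7
  have e7 : ((starRingEnd ℂ) z7 * (-((ν * (1 + δ ^ 2) / δ ^ 2 : ℝ) : ℂ) * z7
        + (((δ ^ 2 - 1) / δ : ℝ) : ℂ) * z1 * (starRingEnd ℂ) z3
        - ((δ ^ 6 * (3 + δ ^ 2) / (2 * ν * (4 + δ ^ 2) * (1 + δ ^ 2)) : ℝ) : ℂ) * z7
            * ((‖z1‖ ^ 2 : ℝ) : ℂ)
        - (((1 + 3 * δ ^ 2) / (2 * ν * δ ^ 2 * (1 + 4 * δ ^ 2) * (1 + δ ^ 2)) : ℝ) : ℂ) * z7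
            * ((‖z3‖ ^ 2 : ℝ) : ℂ))).re
      = -(ν * (1 + δ ^ 2) / δ ^ 2) * e
        + ((δ ^ 2 - 1) / δ) * ((starRingEnd ℂ) z1 * (z3 * z7)).re
        - (δ ^ 6 * (3 + δ ^ 2) / (2 * ν * (4 + δ ^ 2) * (1 + δ ^ 2))) * (e * a)
        - ((1 + 3 * δ ^ 2) / (2 * ν * δ ^ 2 * (1 + 4 * δ ^ 2) * (1 + δ ^ 2))) * (e * b) := by
    have hc7 : (starRingEnd ℂ) z7 * (-((ν * (1 + δ ^ 2) / δ ^ 2 : ℝ) : ℂ) * z7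
          + (((δ ^ 2 - 1) / δ : ℝ) : ℂ) * z1 * (starRingEnd ℂ) z3
          - ((δ ^ 6 * (3 + δ ^ 2) / (2 * ν * (4 + δ ^ 2) * (1 + δ ^ 2)) : ℝ) : ℂ) * z7
              * ((‖z1‖ ^ 2 : ℝ) : ℂ)
          - (((1 + 3 * δ ^ 2) / (2 * ν * δ ^ 2 * (1 + 4 * δ ^ 2) * (1 + δ ^ 2)) : ℝ) : ℂ) * z7
              * ((‖z3‖ ^ 2 : ℝ) : ℂ))
        = ((-(ν * (1 + δ ^ 2) / δ ^ 2) * e : ℝ) : ℂ)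
          + (((δ ^ 2 - 1) / δ : ℝ) : ℂ) * ((starRingEnd ℂ) z7 * (z1 * (starRingEnd ℂ) z3))
          - ((δ ^ 6 * (3 + δ ^ 2) / (2 * ν * (4 + δ ^ 2) * (1 + δ ^ 2)) * (e * a) : ℝ) : ℂ)
          - (((1 + 3 * δ ^ 2) / (2 * ν * δ ^ 2 * (1 + 4 * δ ^ 2) * (1 + δ ^ 2)) * (e * b) : ℝ) : ℂ) := by
      rw [Complex.sq_norm, Complex.sq_norm, ← ha', ← hb']
      push_cast
      linear_combination (-((ν:ℂ) * (1 + (δ:ℂ) ^ 2) / (δ:ℂ) ^ 2)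
          - (δ:ℂ) ^ 6 * (3 + (δ:ℂ) ^ 2) / (2 * (ν:ℂ) * (4 + (δ:ℂ) ^ 2) * (1 + (δ:ℂ) ^ 2)) * (a:ℂ)
          - (1 + 3 * (δ:ℂ) ^ 2) / (2 * (ν:ℂ) * (δ:ℂ) ^ 2 * (1 + 4 * (δ:ℂ) ^ 2) * (1 + (δ:ℂ) ^ 2)) * (b:ℂ)) * hee
    rw [hc7]
    simp only [Complex.add_re, Complex.sub_re, Complex.re_ofReal_mul, Complex.ofReal_re]
    rw [hX7]
  rw [e1, e3, e5, e7]
  set X := ((starRingEnd ℂ) z1 * (z3 * z7)).re with hX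
  set Y := ((starRingEnd ℂ) z1 * ((starRingEnd ℂ) z3 * z5)).re with hY
  -- coefficient cancellation for the cross terms
  have hδ2 : (0:ℝ) < δ ^ 2 := by positivity
  have h1δ : (0:ℝ) < 1 + δ ^ 2 := by positivity
  have hco : 1 / (δ * (1 + δ ^ 2)) - δ ^ 3 / (1 + δ ^ 2) + (δ ^ 2 - 1) / δ = 0 := by
    field_simp
    ring
  have hXY : (1 / (δ * (1 + δ ^ 2))) * (X - Y) + (δ ^ 3 / (1 + δ ^ 2)) * (Y - X)
      - ((δ ^ 2 - 1) / δ) * Y + ((δ ^ 2 - 1) / δ) * X = 0 := by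
    linear_combination (X - Y) * hco
  have t1 : (3 * δ ^ 6 / (2 * ν * (4 + δ ^ 2) * (1 + δ ^ 2) ^ 2)) * (a * (c + e))
      ≤ (δ ^ 6 * (3 + δ ^ 2) / (2 * ν * (4 + δ ^ 2) * (1 + δ ^ 2))) * (c * a)
        + (δ ^ 6 * (3 + δ ^ 2) / (2 * ν * (4 + δ ^ 2) * (1 + δ ^ 2))) * (e * a) := by
    nlinarith [mul_le_mul_of_nonneg_right hAB (mul_nonneg ha0 (add_nonneg hc0 he0))]
  have t2 : (3 * δ ^ 2 / (2 * ν * (1 + 4 * δ ^ 2) * (1 + δ ^ 2) ^ 2)) * (b * (c + e))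
      ≤ ((1 + 3 * δ ^ 2) / (2 * ν * δ ^ 2 * (1 + 4 * δ ^ 2) * (1 + δ ^ 2))) * (c * b)
        + ((1 + 3 * δ ^ 2) / (2 * ν * δ ^ 2 * (1 + 4 * δ ^ 2) * (1 + δ ^ 2))) * (e * b) := by
    nlinarith [mul_le_mul_of_nonneg_right hA'B' (mul_nonneg hb0 (add_nonneg hc0 he0))]
  have t3 : -(ν / δ ^ 2) * a ≤ -K * a := mul_le_mul_of_nonneg_right (neg_le_neg hK2) ha0
  have t4 : -ν * b ≤ -K * b := mul_le_mul_of_nonneg_right (neg_le_neg hK1) hb0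
  have t5 : -(ν * (1 + δ ^ 2) / δ ^ 2) * c ≤ -K * c :=
    mul_le_mul_of_nonneg_right (neg_le_neg hK5) hc0
  have t6 : -(ν * (1 + δ ^ 2) / δ ^ 2) * e ≤ -K * e :=
    mul_le_mul_of_nonneg_right (neg_le_neg hK5) he0
  linarith [hXY, t1, t2, t3, t4, t5, t6]

/-- For the asymmetric center-manifold system with ν > 0 and
δ ∈ (√(2/3), √(3/2)), the energy E(t) = (1/2)(|ω1|² + |ω3|² + |ω5|² + |ω7|²) satisfies
E(t) ≤ E(0) e^{−2K₁νt} for all t ≥ 0, where K₁ = min(1, 1/δ²). -/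
theorem energy_decay
    (ν δ : ℝ) (hν : 0 < ν)
    (hδ1 : Real.sqrt (2 / 3) < δ) (hδ2 : δ < Real.sqrt (3 / 2))
    (ω1 ω3 ω5 ω7 : ℝ → ℂ)
    (h1 : ∀ t : ℝ, 0 ≤ t → HasDerivAt ω1
      (-((ν / δ ^ 2 : ℝ) : ℂ) * ω1 t
        + ((1 / (δ * (1 + δ ^ 2)) : ℝ) : ℂ) * (ω3 t * ω7 t - (starRingEnd ℂ) (ω3 t) * ω5 t)
        + ((3 * δ ^ 6 / (2 * ν * (4 + δ ^ 2) * (1 + δ ^ 2) ^ 2) : ℝ) : ℂ) * ω1 t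
            * ((‖ω5 t‖ ^ 2 + ‖ω7 t‖ ^ 2 : ℝ) : ℂ)) t)
    (h3 : ∀ t : ℝ, 0 ≤ t → HasDerivAt ω3
      (-(ν : ℂ) * ω3 t
        + ((δ ^ 3 / (1 + δ ^ 2) : ℝ) : ℂ) * ((starRingEnd ℂ) (ω1 t) * ω5 t - ω1 t * (starRingEnd ℂ) (ω7 t))
        + ((3 * δ ^ 2 / (2 * ν * (1 + 4 * δ ^ 2) * (1 + δ ^ 2) ^ 2) : ℝ) : ℂ) * ω3 t
            * ((‖ω5 t‖ ^ 2 + ‖ω7 t‖ ^ 2 : ℝ) : ℂ)) t)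
    (h5 : ∀ t : ℝ, 0 ≤ t → HasDerivAt ω5
      (-((ν * (1 + δ ^ 2) / δ ^ 2 : ℝ) : ℂ) * ω5 t
        - (((δ ^ 2 - 1) / δ : ℝ) : ℂ) * ω1 t * ω3 t
        - ((δ ^ 6 * (3 + δ ^ 2) / (2 * ν * (4 + δ ^ 2) * (1 + δ ^ 2)) : ℝ) : ℂ) * ω5 t
            * ((‖ω1 t‖ ^ 2 : ℝ) : ℂ)
        - (((1 + 3 * δ ^ 2) / (2 * ν * δ ^ 2 * (1 + 4 * δ ^ 2) * (1 + δ ^ 2)) : ℝ) : ℂ) * ω5 t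
            * ((‖ω3 t‖ ^ 2 : ℝ) : ℂ)) t)
    (h7 : ∀ t : ℝ, 0 ≤ t → HasDerivAt ω7
      (-((ν * (1 + δ ^ 2) / δ ^ 2 : ℝ) : ℂ) * ω7 t
        + (((δ ^ 2 - 1) / δ : ℝ) : ℂ) * ω1 t * (starRingEnd ℂ) (ω3 t)
        - ((δ ^ 6 * (3 + δ ^ 2) / (2 * ν * (4 + δ ^ 2) * (1 + δ ^ 2)) : ℝ) : ℂ) * ω7 t
            * ((‖ω1 t‖ ^ 2 : ℝ) : ℂ)
        - (((1 + 3 * δ ^ 2) / (2 * ν * δ ^ 2 * (1 + 4 * δ ^ 2) * (1 + δ ^ 2)) : ℝ) : ℂ) * ω7 t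
            * ((‖ω3 t‖ ^ 2 : ℝ) : ℂ)) t)
    :
    ∀ t : ℝ, 0 ≤ t →
      (1 / 2) * (‖ω1 t‖ ^ 2 + ‖ω3 t‖ ^ 2
          + ‖ω5 t‖ ^ 2 + ‖ω7 t‖ ^ 2)
        ≤ (1 / 2) * (‖ω1 0‖ ^ 2 + ‖ω3 0‖ ^ 2
            + ‖ω5 0‖ ^ 2 + ‖ω7 0‖ ^ 2)
          * Real.exp (-2 * min 1 (1 / δ ^ 2) * ν * t) := by
  have hδ : 0 < δ := lt_trans (Real.sqrt_pos.mpr (by norm_num)) hδ1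
  set K : ℝ := min 1 (1 / δ ^ 2) * ν with hK
  have hδsq : (0:ℝ) < δ ^ 2 := by positivity
  have hK1 : K ≤ ν := by
    have : min 1 (1 / δ ^ 2) ≤ 1 := min_le_left _ _
    nlinarith
  have hK2 : K ≤ ν / δ ^ 2 := by
    have hmin : min 1 (1 / δ ^ 2) ≤ 1 / δ ^ 2 := min_le_right _ _
    have h' : min 1 (1 / δ ^ 2) * ν ≤ 1 / δ ^ 2 * ν :=
      mul_le_mul_of_nonneg_right hmin hν.le
    rw [hK]
    calc min 1 (1 / δ ^ 2) * ν ≤ 1 / δ ^ 2 * ν := h'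
      _ = ν / δ ^ 2 := by ring
  have hK5 : K ≤ ν * (1 + δ ^ 2) / δ ^ 2 := by
    refine hK2.trans ?_
    have hnum : ν ≤ ν * (1 + δ ^ 2) := by nlinarith
    exact (div_le_div_iff_of_pos_right hδsq).mpr hnum
  -- the energy function
  set E : ℝ → ℝ := fun s => Complex.normSq (ω1 s) + Complex.normSq (ω3 s)
      + Complex.normSq (ω5 s) + Complex.normSq (ω7 s) with hE
  have key : ∀ x : ℝ, 0 ≤ x → ∃ d, HasDerivAt E d x ∧ d ≤ -(2 * K) * E x := by
    intro x hx
    have hd1 := normSq_hasDerivAt' (h1 x hx)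
    have hd3 := normSq_hasDerivAt' (h3 x hx)
    have hd5 := normSq_hasDerivAt' (h5 x hx)
    have hd7 := normSq_hasDerivAt' (h7 x hx)
    refine ⟨_, ((hd1.add hd3).add hd5).add hd7, ?_⟩
    have := main_bound' ν δ K hν hδ hK1 hK2 hK5 (ω1 x) (ω3 x) (ω5 x) (ω7 x)
    simpa [hE] using this
  -- Gronwall via monotonicity of g = E * exp(2Kt)
  set g : ℝ → ℝ := fun s => E s * Real.exp (2 * K * s) with hg
  have hgd : ∀ x : ℝ, 0 ≤ x → ∃ d, d ≤ 0 ∧ HasDerivAt g d x := by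
    intro x hx
    obtain ⟨d, hEd, hdle⟩ := key x hx
    have hlin : HasDerivAt (fun s : ℝ => 2 * K * s) (2 * K) x := by
      simpa using (hasDerivAt_id x).const_mul (2 * K)
    have hexp : HasDerivAt (fun s : ℝ => Real.exp (2 * K * s))
        (Real.exp (2 * K * x) * (2 * K)) x := hlin.exp
    have hprod := hEd.mul hexp
    refine ⟨_, ?_, hprod⟩
    have hexppos := Real.exp_pos (2 * K * x)
    have h0 : d + 2 * K * E x ≤ 0 := by linarith
    have : d * Real.exp (2 * K * x) + E x * (Real.exp (2 * K * x) * (2 * K))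
        = (d + 2 * K * E x) * Real.exp (2 * K * x) := by ring
    rw [this]
    exact mul_nonpos_of_nonpos_of_nonneg h0 hexppos.le
  have hanti : AntitoneOn g (Set.Ici 0) := by
    apply antitoneOn_of_deriv_nonpos (convex_Ici 0)
    · intro x hx
      obtain ⟨d, _, hd⟩ := hgd x hx
      exact hd.continuousAt.continuousWithinAt
    · rw [interior_Ici]
      intro x hx
      obtain ⟨d, _, hd⟩ := hgd x (le_of_lt hx)
      exact hd.differentiableAt.differentiableWithinAt
    · rw [interior_Ici]
      intro x hx
      obtain ⟨d, hd0, hd⟩ := hgd x (le_of_lt hx)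
      rw [hd.deriv]
      exact hd0
  intro t ht
  have hgt : g t ≤ g 0 := hanti Set.self_mem_Ici (Set.mem_Ici.mpr ht) ht
  have hg0 : g 0 = E 0 := by simp [hg]
  have hEt : E t ≤ E 0 * Real.exp (-(2 * K * t)) := by
    rw [Real.exp_neg, ← div_eq_mul_inv, le_div_iff₀ (Real.exp_pos _)]
    rw [hg0] at hgt
    exact hgt
  have hexpeq : Real.exp (-2 * min 1 (1 / δ ^ 2) * ν * t) = Real.exp (-(2 * K * t)) := by
    rw [hK]; ring_nf
  rw [hexpeq]
  simp only [Complex.sq_norm]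
  have hEt' : Complex.normSq (ω1 t) + Complex.normSq (ω3 t) + Complex.normSq (ω5 t)
      + Complex.normSq (ω7 t)
      ≤ (Complex.normSq (ω1 0) + Complex.normSq (ω3 0) + Complex.normSq (ω5 0)
        + Complex.normSq (ω7 0)) * Real.exp (-(2 * K * t)) := hEt
  linarith
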